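/- (Monotonicity in the current.) Let 0 < j ≤ j′ and let φ_t^{(j,δ,−)} and φ_t^{(j′,δ,−)} be the delta− interface evolutions with currents j and j′ respectively, started from initial interfaces φ ≥ ψ (both 1-Lipschitz, ≥ |r|, equal to |r| outside a compact). Then for all t ≥ 0: φ_t^{(j,δ,−)} − jt ≥ φ_t^{(j′,δ,−)} − j′t pointwise, for times t = kδ. -/

import Mathlib

open MeasureTheory

/-- The Gaussian heat kernel. -/
noncomputable def gaussK (t r r' : ℝ) : ℝ :=
  Real.exp (-(r - r') ^ 2 / (2 * t)) / Real.sqrt (2 * Real.pi * t)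

open Real

noncomputable def gk (t u : ℝ) : ℝ :=
  Real.exp (-(1/(2*t)) * u ^ 2) / Real.sqrt (2 * Real.pi * t)

lemma gaussK_eq (t r r' : ℝ) : gaussK t r r' = gk t (r' - r) := by
  unfold gaussK gk
  congr 1
  ring_nf

lemma gk_nonneg (t u : ℝ) : 0 ≤ gk t u :=
  div_nonneg (Real.exp_pos _).le (Real.sqrt_nonneg _)

lemma gaussK_nonneg (t r r' : ℝ) : 0 ≤ gaussK t r r' := by
  rw [gaussK_eq]; exact gk_nonneg _ _

lemma gk_integrable {t : ℝ} (ht : 0 < t) : Integrable (gk t) :=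
  (integrable_exp_neg_mul_sq (by positivity : (0:ℝ) < 1/(2*t))).div_const _

lemma gk_abs_integrable {t : ℝ} (ht : 0 < t) : Integrable (fun u => gk t u * |u|) := by
  have h := (integrable_rpow_mul_exp_neg_mul_sq (by positivity : (0:ℝ) < 1/(2*t))
    (by norm_num : (-1:ℝ) < 1)).div_const (Real.sqrt (2 * Real.pi * t))
  refine h.abs.congr (Filter.Eventually.of_forall fun u => ?_)
  simp only [Real.rpow_one]
  rw [abs_div, abs_mul, abs_of_nonneg (Real.exp_pos _).le,
    abs_of_nonneg (Real.sqrt_nonneg _)]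
  unfold gk
  ring

lemma gk_integral {t : ℝ} (ht : 0 < t) : ∫ u, gk t u = 1 := by
  unfold gk
  rw [integral_div, integral_gaussian]
  have h : Real.pi / (1/(2*t)) = 2 * Real.pi * t := by field_simp
  rw [h, div_self]
  exact (Real.sqrt_pos.mpr (by positivity)).ne'

/-- The heat semigroup applied to an interface. -/
noncomputable def heatEvol (t : ℝ) (f : ℝ → ℝ) (r : ℝ) : ℝ :=
  ∫ r', gaussK t r r' * f r'

/-- The invariant propagated along the evolution. -/
def Good (C : ℝ) (f : ℝ → ℝ) : Prop :=
  LipschitzWith 1 f ∧ (∀ r, 0 ≤ f r) ∧ ∀ r, f r ≤ C + |r|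

lemma Good.abs_le {C f} (h : Good C f) (r : ℝ) : |f r| ≤ C + |r| := by
  rw [abs_of_nonneg (h.2.1 r)]; exact h.2.2 r

lemma integrable_maj {t : ℝ} (ht : 0 < t) (A r : ℝ) :
    Integrable (fun x => gk t (x - r) * (A + |x - r|)) := by
  have h1 : Integrable (fun u => gk t u * (A + |u|)) := by
    have := ((gk_integrable ht).mul_const A).add (gk_abs_integrable ht)
    exact this.congr (Filter.Eventually.of_forall fun u => by simp [Pi.add_apply]; ring)
  exact h1.comp_sub_right r

lemma integrable_kernel_mul {t : ℝ} (ht : 0 < t) {f : ℝ → ℝ} {C : ℝ}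
    (hf : Good C f) (r : ℝ) :
    Integrable (fun r' => gaussK t r r' * f r') := by
  refine Integrable.mono' (integrable_maj ht (C + |r|) r) ?_
    (Filter.Eventually.of_forall fun x => ?_)
  · refine (Continuous.aestronglyMeasurable ?_)
    have hc : Continuous fun r' => gaussK t r r' := by
      unfold gaussK; fun_prop
    exact hc.mul hf.1.continuous
  · rw [Real.norm_eq_abs, abs_mul, abs_of_nonneg (gaussK_nonneg t r x), gaussK_eq]
    have h1 : |f x| ≤ (C + |r|) + |x - r| := by
      have := hf.abs_le x
      have h2 : |x| ≤ |r| + |x - r| := by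
        calc |x| = |r + (x - r)| := by ring_nf
        _ ≤ |r| + |x - r| := abs_add_le _ _
      linarith
    exact mul_le_mul_of_nonneg_left h1 (gk_nonneg _ _)

lemma kernel_integral {t : ℝ} (ht : 0 < t) (r : ℝ) :
    ∫ r', gaussK t r r' = 1 := by
  simp_rw [gaussK_eq]
  rw [integral_sub_right_eq_self (gk t) r]
  exact gk_integral ht

lemma kernel_integrable {t : ℝ} (ht : 0 < t) (r : ℝ) :
    Integrable (fun r' => gaussK t r r') := by
  simp_rw [gaussK_eq]
  exact (gk_integrable ht).comp_sub_right r

lemma heat_mono {t : ℝ} {f g : ℝ → ℝ}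
    (hf : Integrable (fun r' => gaussK t r r' * f r'))
    (hg : Integrable (fun r' => gaussK t r r' * g r'))
    (h : ∀ x, f x ≤ g x) : heatEvol t f r ≤ heatEvol t g r :=
  integral_mono hf hg fun x => mul_le_mul_of_nonneg_left (h x) (gaussK_nonneg t r x)

lemma heat_shift {t : ℝ} (ht : 0 < t) {f : ℝ → ℝ} (r c : ℝ)
    (hf : Integrable (fun r' => gaussK t r r' * f r')) :
    heatEvol t (fun x => f x + c) r = heatEvol t f r + c := by
  unfold heatEvol
  have hker := (kernel_integrable ht r).mul_const c
  simp_rw [mul_add]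
  rw [integral_add hf hker, MeasureTheory.integral_mul_const, kernel_integral ht r, one_mul]

lemma heat_rep {t : ℝ} {f : ℝ → ℝ} (r : ℝ) :
    heatEvol t f r = ∫ u, gk t u * f (u + r) := by
  unfold heatEvol
  simp_rw [gaussK_eq]
  have := integral_sub_right_eq_self (μ := volume) (fun u => gk t u * f (u + r)) r
  simp only [sub_add_cancel] at this
  exact this

lemma heat_rep_integrable {t : ℝ} (ht : 0 < t) {f : ℝ → ℝ} {C : ℝ}
    (hf : Good C f) (r : ℝ) :
    Integrable (fun u => gk t u * f (u + r)) := by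
  have h := (integrable_kernel_mul ht hf r).comp_add_right r
  refine h.congr (Filter.Eventually.of_forall fun u => ?_)
  simp only [gaussK_eq, add_sub_cancel_right]

lemma heat_good {t : ℝ} (ht : 0 < t) {f : ℝ → ℝ} {C : ℝ} (hC : 0 ≤ C)
    (hf : Good C f) : Good (C + ∫ u, gk t u * |u|) (heatEvol t f) := by
  refine ⟨?_, ?_, ?_⟩
  · -- Lipschitz
    refine LipschitzWith.of_dist_le_mul fun r₁ r₂ => ?_
    simp only [Real.dist_eq, NNReal.coe_one, one_mul]
    rw [heat_rep r₁, heat_rep r₂,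
      ← integral_sub (heat_rep_integrable ht hf r₁) (heat_rep_integrable ht hf r₂)]
    calc |∫ u, gk t u * f (u + r₁) - gk t u * f (u + r₂)|
        ≤ ∫ u, |gk t u * f (u + r₁) - gk t u * f (u + r₂)| :=
          by simpa [Real.norm_eq_abs] using
            norm_integral_le_integral_norm fun u => gk t u * f (u + r₁) - gk t u * f (u + r₂)
      _ ≤ ∫ u, gk t u * |r₁ - r₂| := by
          refine integral_mono ((heat_rep_integrable ht hf r₁).sub
            (heat_rep_integrable ht hf r₂)).abs ((gk_integrable ht).mul_const _)
            fun u => ?_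
          rw [← mul_sub, abs_mul, abs_of_nonneg (gk_nonneg t u)]
          refine mul_le_mul_of_nonneg_left ?_ (gk_nonneg t u)
          have := hf.1.dist_le_mul (u + r₁) (u + r₂)
          simpa [Real.dist_eq, add_sub_add_left_eq_sub] using this
      _ = |r₁ - r₂| := by
          rw [MeasureTheory.integral_mul_const, gk_integral ht, one_mul]
  · -- nonneg
    intro r
    exact integral_nonneg fun x => mul_nonneg (gaussK_nonneg t r x) (hf.2.1 x)
  · -- upper bound
    intro r
    have hmono : heatEvol t f r ≤ ∫ x, gk t (x - r) * ((C + |r|) + |x - r|) := by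
      refine integral_mono (integrable_kernel_mul ht hf r) (integrable_maj ht (C + |r|) r)
        fun x => ?_
      rw [gaussK_eq]
      refine mul_le_mul_of_nonneg_left ?_ (gk_nonneg _ _)
      have h2 : |x| ≤ |r| + |x - r| := by
        calc |x| = |r + (x - r)| := by ring_nf
        _ ≤ |r| + |x - r| := abs_add_le _ _
      have := hf.2.2 x
      linarith
    have hval : (∫ x, gk t (x - r) * ((C + |r|) + |x - r|))
        = (C + |r|) + ∫ u, gk t u * |u| := by
      rw [show (fun x => gk t (x - r) * ((C + |r|) + |x - r|))
          = (fun u => gk t u * (C + |r|) + gk t u * |u|) ∘ (fun x => x - r) by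
        funext x; simp [Function.comp]; ring]
      simp only [Function.comp_def]
      rw [integral_sub_right_eq_self (μ := volume)
        (fun u => gk t u * (C + |r|) + gk t u * |u|) r]
      rw [integral_add ((gk_integrable ht).mul_const _) (gk_abs_integrable ht),
        MeasureTheory.integral_mul_const, gk_integral ht, one_mul]
    calc heatEvol t f r ≤ _ := hmono
      _ = (C + |r|) + ∫ u, gk t u * |u| := hval
      _ = (C + ∫ u, gk t u * |u|) + |r| := by ring

/-- The delta⁻ interface evolution with current `j`, sampled at times `kδ`. -/
noncomputable def deltaMinus (j δ : ℝ) (φ : ℝ → ℝ) : ℕ → ℝ → ℝ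
  | 0 => φ
  | k + 1 => fun r =>
      max (heatEvol δ (deltaMinus j δ φ k) r) (|r| + ((k : ℝ) + 1) * j * δ)

lemma abs_lipschitz : LipschitzWith 1 (fun r : ℝ => |r|) := by
  refine LipschitzWith.of_dist_le_mul fun x y => ?_
  simp only [Real.dist_eq, NNReal.coe_one, one_mul]
  exact abs_abs_sub_abs_le_abs_sub x y

lemma lipschitz_add_const {K : NNReal} {f : ℝ → ℝ} (h : LipschitzWith K f) (c : ℝ) :
    LipschitzWith K fun x => f x + c := by
  refine LipschitzWith.of_dist_le_mul fun x y => ?_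
  have := h.dist_le_mul x y
  simpa [Real.dist_eq, add_sub_add_right_eq_sub] using this

lemma good_max_cone {C c : ℝ} {f : ℝ → ℝ} (hf : LipschitzWith 1 f)
    (hub : ∀ r, f r ≤ C + |r|) (hc : 0 ≤ c) :
    Good (max C c) (fun r => max (f r) (|r| + c)) := by
  refine ⟨by simpa using hf.max (lipschitz_add_const abs_lipschitz c), fun r => ?_, fun r => ?_⟩
  · exact le_trans (by positivity) (le_max_right _ _)
  · refine max_le (le_trans (hub r) ?_) ?_
    · gcongr; exact le_max_left _ _
    · rw [add_comm]; gcongr; exact le_max_right _ _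

lemma good_deltaMinus {j δ : ℝ} (hj : 0 ≤ j) (hδ : 0 < δ) {φ : ℝ → ℝ}
    {C : ℝ} (hC : 0 ≤ C) (hφ : Good C φ) (k : ℕ) :
    ∃ C', 0 ≤ C' ∧ Good C' (deltaMinus j δ φ k) := by
  induction k with
  | zero => exact ⟨C, hC, hφ⟩
  | succ k ih =>
    obtain ⟨C', hC', hG⟩ := ih
    have hheat := heat_good hδ hC' hG
    have hm : 0 ≤ ∫ u, gk δ u * |u| :=
      integral_nonneg fun u => mul_nonneg (gk_nonneg _ _) (abs_nonneg _)
    refine ⟨max (C' + ∫ u, gk δ u * |u|) (((k : ℝ) + 1) * j * δ),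
      le_trans (by linarith) (le_max_left _ _), ?_⟩
    exact good_max_cone hheat.1 hheat.2.2 (by positivity)

lemma good_add_const {C c : ℝ} {f : ℝ → ℝ} (hc : 0 ≤ c) (hf : Good C f) :
    Good (C + c) (fun r => f r + c) := by
  obtain ⟨h1, h2, h3⟩ := hf
  refine ⟨lipschitz_add_const h1 c, fun r => by have := h2 r; positivity, fun r => ?_⟩
  have := h3 r
  show f r + c ≤ C + c + |r|
  linarith

/-- (Monotonicity in the current.) If `0 < j ≤ j'` and the initial interfaces
satisfy `φ ≥ ψ`, then at every time `t = kδ` the delta⁻ evolutions satisfy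
`φ_t^{(j)} − jt ≥ ψ_t^{(j')} − j't` pointwise. -/
theorem delta_monotone_in_current (j j' δ : ℝ) (hj : 0 < j) (hjj' : j ≤ j')
    (hδ : 0 < δ) (φ ψ : ℝ → ℝ)
    (hφlip : LipschitzWith 1 φ) (hφge : ∀ r : ℝ, |r| ≤ φ r)
    (hφcone : ∃ M : ℝ, ∀ r : ℝ, M ≤ |r| → φ r = |r|)
    (hψlip : LipschitzWith 1 ψ) (hψge : ∀ r : ℝ, |r| ≤ ψ r)
    (hψcone : ∃ M : ℝ, ∀ r : ℝ, M ≤ |r| → ψ r = |r|)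
    (hle : ∀ r : ℝ, ψ r ≤ φ r) :
    ∀ (k : ℕ) (r : ℝ),
      deltaMinus j' δ ψ k r - j' * ((k : ℝ) * δ)
        ≤ deltaMinus j δ φ k r - j * ((k : ℝ) * δ) := by
  -- initial interfaces are Good
  have goodInit : ∀ (f : ℝ → ℝ), LipschitzWith 1 f → (∀ r, |r| ≤ f r) →
      ∃ C, 0 ≤ C ∧ Good C f := by
    intro f hlip hge
    have h0 : (0:ℝ) ≤ f 0 := by simpa using hge 0
    refine ⟨f 0, h0, hlip, fun r => le_trans (abs_nonneg r) (hge r), fun r => ?_⟩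
    have := hlip.dist_le_mul r 0
    simp only [Real.dist_eq, NNReal.coe_one, one_mul, sub_zero] at this
    have := abs_le.mp this
    linarith [this.2]
  obtain ⟨Cφ, hCφ, hGφ⟩ := goodInit φ hφlip hφge
  obtain ⟨Cψ, hCψ, hGψ⟩ := goodInit ψ hψlip hψge
  -- the key inequality in additive form
  have key : ∀ k : ℕ, ∀ r : ℝ,
      deltaMinus j' δ ψ k r ≤ deltaMinus j δ φ k r + (j' - j) * ((k : ℝ) * δ) := by
    intro k
    induction k with
    | zero => intro r; simpa [deltaMinus] using hle r
    | succ k ih =>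
      intro r
      obtain ⟨Cf, hCf, hGf⟩ := good_deltaMinus hj.le hδ hCφ hGφ k
      obtain ⟨Cg, hCg, hGg⟩ := good_deltaMinus (le_trans hj.le hjj') hδ hCψ hGψ k
      set f := deltaMinus j δ φ k
      set g := deltaMinus j' δ ψ k
      set D : ℝ := (j' - j) * ((k : ℝ) * δ) with hD
      have hD0 : 0 ≤ D := by
        have : (0:ℝ) ≤ (k : ℝ) * δ := by positivity
        have h2 : (0:ℝ) ≤ j' - j := by linarith
        positivity
      set D' : ℝ := (j' - j) * (((k : ℝ) + 1) * δ) with hD'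
      have hDD' : D ≤ D' := by
        have h2 : (0:ℝ) ≤ j' - j := by linarith
        have : (k : ℝ) * δ ≤ ((k : ℝ) + 1) * δ := by nlinarith
        exact mul_le_mul_of_nonneg_left this h2
      have hGfD : Good (Cf + D) (fun x => f x + D) := good_add_const hD0 hGf
      -- heat part
      have h1 : heatEvol δ g r ≤ heatEvol δ f r + D := by
        calc heatEvol δ g r
            ≤ heatEvol δ (fun x => f x + D) r :=
              heat_mono (integrable_kernel_mul hδ hGg r)
                (integrable_kernel_mul hδ hGfD r) ih
          _ = heatEvol δ f r + D := heat_shift hδ r D (integrable_kernel_mul hδ hGf r)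
      have hcast : (((k + 1 : ℕ)) : ℝ) = (k : ℝ) + 1 := by push_cast; ring
      show max (heatEvol δ g r) (|r| + ((k : ℝ) + 1) * j' * δ)
          ≤ max (heatEvol δ f r) (|r| + ((k : ℝ) + 1) * j * δ)
            + (j' - j) * ((((k + 1 : ℕ)) : ℝ) * δ)
      rw [hcast]
      have hD'eq : (j' - j) * (((k : ℝ) + 1) * δ) = D' := rfl
      rw [hD'eq]
      refine max_le ?_ ?_
      · have h2 := le_max_left (heatEvol δ f r) (|r| + ((k : ℝ) + 1) * j * δ)
        linarith
      · have h2 := le_max_right (heatEvol δ f r) (|r| + ((k : ℝ) + 1) * j * δ)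
        have h3 : |r| + ((k : ℝ) + 1) * j' * δ
            = (|r| + ((k : ℝ) + 1) * j * δ) + D' := by rw [hD']; ring
        linarith
  intro k r
  have := key k r
  linarith [this]
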